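/- Let λ ≠ 0, m ≠ 1, and A be real constants. The function u(x,t) = ((A + x)/t − (λ(1−m)/2)·t)^{1/(1−m)} satisfies u_t + u^{1−m}·u_x + λ·u^m = 0 at every point (x,t) with t ≠ 0 at which the base (A + x)/t − (λ(1−m)/2)·t is positive. -/

import Mathlib

open Real

/-- the function
`u(x,t) = ((A + x)/t − (λ(1−m)/2)·t)^{1/(1−m)}` satisfies
`u_t + u^{1−m}·u_x + λ·u^m = 0` at every point with `t ≠ 0` at which the base
`(A + x)/t − (λ(1−m)/2)·t` is positive. -/
theorem case3_invariant_solution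
    (lam m A : ℝ) (hlam : lam ≠ 0) (hm : m ≠ 1) :
    ∀ u : ℝ × ℝ → ℝ,
      u = (fun p : ℝ × ℝ =>
        ((A + p.1) / p.2 - (lam * (1 - m) / 2) * p.2) ^ (1 / (1 - m))) →
      ∀ x t : ℝ, t ≠ 0 →
        0 < (A + x) / t - (lam * (1 - m) / 2) * t →
        fderiv ℝ u (x, t) (0, 1) + u (x, t) ^ (1 - m) * fderiv ℝ u (x, t) (1, 0)
          + lam * u (x, t) ^ m = 0 := by
  intro u hu x t ht hbase
  subst hu
  set c : ℝ := lam * (1 - m) / 2 with hc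
  set q : ℝ := 1 / (1 - m) with hq
  have h1m : (1 : ℝ) - m ≠ 0 := sub_ne_zero.mpr (Ne.symm hm)
  -- derivative of the base function
  have hinv : HasFDerivAt (fun p : ℝ × ℝ => (p.2)⁻¹)
      ((-(t⁻¹ * t⁻¹)) • (ContinuousLinearMap.snd ℝ ℝ ℝ)) (x, t) := by
    have hsnd : HasFDerivAt (Prod.snd : ℝ × ℝ → ℝ)
        (ContinuousLinearMap.snd ℝ ℝ ℝ) (x, t) := hasFDerivAt_snd
    have h : HasFDerivAt (fun p : ℝ × ℝ => (p.2)⁻¹)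
        ((-(ContinuousLinearMap.mulLeftRight ℝ ℝ t⁻¹) t⁻¹).comp
          (ContinuousLinearMap.snd ℝ ℝ ℝ)) (x, t) :=
      (hasFDerivAt_inv' ht).comp (x, t) hsnd
    refine h.congr_fderiv ?_
    ext <;>
      simp [ContinuousLinearMap.mulLeftRight_apply] <;> ring
  have h1 : HasFDerivAt (fun p : ℝ × ℝ => A + p.1)
      (ContinuousLinearMap.fst ℝ ℝ ℝ) (x, t) :=
    (hasFDerivAt_fst).const_add A
  have hprod := h1.mul hinv
  have hg : HasFDerivAt (fun p : ℝ × ℝ => (A + p.1) / p.2 - c * p.2)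
      ((t⁻¹ • (ContinuousLinearMap.fst ℝ ℝ ℝ)
        - ((A + x) / t ^ 2) • (ContinuousLinearMap.snd ℝ ℝ ℝ))
        - c • (ContinuousLinearMap.snd ℝ ℝ ℝ)) (x, t) := by
    have heq : (fun p : ℝ × ℝ => (A + p.1) / p.2 - c * p.2)
        = fun p : ℝ × ℝ => (A + p.1) * (p.2)⁻¹ - c * p.2 := by
      funext p; rw [div_eq_mul_inv]
    rw [heq]
    have hsnd : HasFDerivAt (fun p : ℝ × ℝ => p.2)
        (ContinuousLinearMap.snd ℝ ℝ ℝ) (x, t) := hasFDerivAt_snd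
    have := hprod.sub (hsnd.const_mul c)
    refine this.congr_fderiv ?_
    ext v
    · simp only [ContinuousLinearMap.comp_apply, ContinuousLinearMap.sub_apply,
        ContinuousLinearMap.add_apply, ContinuousLinearMap.smul_apply,
        ContinuousLinearMap.coe_fst', ContinuousLinearMap.coe_snd',
        ContinuousLinearMap.inl_apply, ContinuousLinearMap.neg_apply, smul_eq_mul]
      field_simp
      ring
    · simp only [ContinuousLinearMap.comp_apply, ContinuousLinearMap.sub_apply,
        ContinuousLinearMap.add_apply, ContinuousLinearMap.smul_apply,
        ContinuousLinearMap.coe_fst', ContinuousLinearMap.coe_snd',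
        ContinuousLinearMap.inr_apply, ContinuousLinearMap.neg_apply, smul_eq_mul]
      field_simp
      ring
  have hg0 : (A + x) / t - c * t ≠ 0 := ne_of_gt hbase
  have hu' := hg.rpow_const (p := q) (Or.inl hg0)
  rw [hu'.fderiv]
  set g : ℝ := (A + x) / t - c * t with hgdef
  have happ1 : ((q * g ^ (q - 1)) •
      ((t⁻¹ • (ContinuousLinearMap.fst ℝ ℝ ℝ)
        - ((A + x) / t ^ 2) • (ContinuousLinearMap.snd ℝ ℝ ℝ))
        - c • (ContinuousLinearMap.snd ℝ ℝ ℝ))) (0, 1)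
      = (q * g ^ (q - 1)) * (-(A + x) / t ^ 2 - c) := by
    simp only [ContinuousLinearMap.sub_apply, ContinuousLinearMap.smul_apply,
      ContinuousLinearMap.coe_fst', ContinuousLinearMap.coe_snd', smul_eq_mul]
    ring
  have happ2 : ((q * g ^ (q - 1)) •
      ((t⁻¹ • (ContinuousLinearMap.fst ℝ ℝ ℝ)
        - ((A + x) / t ^ 2) • (ContinuousLinearMap.snd ℝ ℝ ℝ))
        - c • (ContinuousLinearMap.snd ℝ ℝ ℝ))) (1, 0)
      = (q * g ^ (q - 1)) * t⁻¹ := by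
    simp only [ContinuousLinearMap.sub_apply, ContinuousLinearMap.smul_apply,
      ContinuousLinearMap.coe_fst', ContinuousLinearMap.coe_snd', smul_eq_mul]
    ring
  rw [happ1, happ2]
  -- rpow simplifications
  have hgpos : 0 < g := hbase
  have e1 : (g ^ q) ^ (1 - m) = g := by
    rw [← Real.rpow_mul hgpos.le, hq, one_div, inv_mul_cancel₀ h1m, Real.rpow_one]
  have e2 : g ^ (q - 1) = (g ^ q) ^ m := by
    rw [← Real.rpow_mul hgpos.le]
    congr 1
    rw [hq]
    field_simp
    ring
  rw [e1, e2]
  set B : ℝ := (g ^ q) ^ m with hB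
  rw [hgdef, hc, hq]
  field_simp
  ring
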